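/- In a partial cube, every edge of a cycle C is Θ-equivalent to another edge of C distinct from itself. -/

import Mathlib

open SimpleGraph

universe u

variable {V : Type u}

/-- The geodesic interval between two vertices: the set of vertices lying on
shortest paths between them. -/
def gInterval (G : SimpleGraph V) (x y : V) : Set V :=
  {z | G.dist x z + G.dist z y = G.dist x y}

/-- A set of vertices is (geodesically) convex. -/
def GConvex (G : SimpleGraph V) (C : Set V) : Prop :=
  ∀ x ∈ C, ∀ y ∈ C, gInterval G x y ⊆ C

/-- `Wside G a b` is the set `W_ab` of vertices strictly closer to `a` than to `b`. -/
def Wside (G : SimpleGraph V) (a b : V) : Set V :=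
  {x | G.dist a x < G.dist b x}

/-- `Uside G a b` is the set `U_ab` of vertices of `W_ab` having a neighbour in `W_ba`. -/
def Uside (G : SimpleGraph V) (a b : V) : Set V :=
  {x | x ∈ Wside G a b ∧ ∃ y, G.Adj x y ∧ y ∈ Wside G b a}

/-- A graph is bipartite if it admits a proper 2-colouring. -/
def IsBipartiteGraph (G : SimpleGraph V) : Prop :=
  ∃ c : V → Bool, ∀ u v, G.Adj u v → c u ≠ c v

/-- A partial cube: a connected bipartite graph all of whose half-spaces `W_ab`, `W_ba`
are convex (Djoković's characterization). -/
def IsPartialCube (G : SimpleGraph V) : Prop :=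
  G.Connected ∧ IsBipartiteGraph G ∧
    ∀ a b, G.Adj a b → GConvex G (Wside G a b) ∧ GConvex G (Wside G b a)

/-- The Djoković–Winkler relation Θ between (unordered) edges. -/
def ThetaRel (G : SimpleGraph V) (e f : Sym2 V) : Prop :=
  ∃ x y u v : V, e = s(x, y) ∧ f = s(u, v) ∧
    G.dist x u + G.dist y v ≠ G.dist x v + G.dist y u

/-- The geodesic convex hull of a set of vertices. -/
def gConvexHull (G : SimpleGraph V) (A : Set V) : Set V :=
  ⋂₀ {C : Set V | GConvex G C ∧ A ⊆ C}

private def crossB (c : V → Bool) : Sym2 V → Bool :=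
  Sym2.lift ⟨fun a b => xor (c a) (c b), fun a b => by simp [Bool.xor_comm]⟩

private lemma count_parity {G : SimpleGraph V} (c : V → Bool) {u v : V} (p : G.Walk u v) :
    (p.edges.countP (crossB c)) % 2 = if c u = c v then 0 else 1 := by
  induction p with
  | nil => simp
  | @cons u w v h p ih =>
    rw [Walk.edges_cons, List.countP_cons]
    have hcross : crossB c s(u, w) = xor (c u) (c w) := by simp [crossB]
    rw [hcross]
    rcases Bool.eq_false_or_eq_true (c u) with hu | hu <;>
      rcases Bool.eq_false_or_eq_true (c w) with hw | hw <;>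
      rcases Bool.eq_false_or_eq_true (c v) with hv | hv <;>
      simp only [hu, hw, hv] at ih ⊢ <;> simp at ih ⊢ <;> omega

private lemma walk_parity {G : SimpleGraph V} (c : V → Bool)
    (hc : ∀ u v, G.Adj u v → c u ≠ c v) {u v : V} (p : G.Walk u v) :
    (c u = c v) ↔ Even p.length := by
  induction p with
  | nil => simp
  | @cons u w v h p ih =>
    have hne := hc _ _ h
    rw [Walk.length_cons, Nat.even_add_one, ← ih]
    cases hu : c u <;> cases hw : c w <;> cases hv : c v <;> simp_all

/-- In a partial cube, every edge of a cycle is Θ-equivalent to another edge of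
that cycle. -/
theorem stmt_5 (G : SimpleGraph V) (hG : IsPartialCube G) (x : V)
    (C : G.Walk x x) (hC : C.IsCycle) :
    ∀ e ∈ C.edges, ∃ f ∈ C.edges, f ≠ e ∧ ThetaRel G e f := by
  classical
  obtain ⟨hconn, ⟨c, hc⟩, -⟩ := hG
  intro e he
  revert he
  induction e using Sym2.inductionOn with
  | hf a b =>
  intro he
  have hab : G.Adj a b := C.edges_subset_edgeSet he
  have hdab : G.dist a b = 1 := SimpleGraph.dist_eq_one_iff_adj.mpr hab
  have hdba : G.dist b a = 1 := SimpleGraph.dist_eq_one_iff_adj.mpr hab.symm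
  -- no vertex is equidistant from a and b
  have hdiff : ∀ z, G.dist a z ≠ G.dist b z := by
    intro z hz
    obtain ⟨p, -, hp⟩ := hconn.exists_path_of_dist a z
    obtain ⟨q, -, hq⟩ := hconn.exists_path_of_dist b z
    have h1 := walk_parity c hc p
    have h2 := walk_parity c hc q
    rw [hp] at h1; rw [hq] at h2
    rw [hz] at h1
    apply hc a b hab
    by_cases hE : Even (G.dist b z)
    · exact (h1.mpr hE).trans (h2.mpr hE).symm
    · have h4 : c a ≠ c z := fun h => hE (h1.mp h)
      have h5 : c b ≠ c z := fun h => hE (h2.mp h)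
      revert h4 h5
      cases c a <;> cases c b <;> cases c z <;> simp
  set χ : V → Bool := fun z => decide (G.dist a z < G.dist b z) with hχ
  have hχa : χ a = true := by simp [hχ, SimpleGraph.dist_self, hdba]
  have hχb : χ b = false := by simp [hχ, SimpleGraph.dist_self, hdab]
  have hcount : C.edges.countP (crossB χ) % 2 = 0 := by simpa using count_parity χ C
  set L := C.edges.filter (crossB χ) with hL
  have hlen : L.length = C.edges.countP (crossB χ) := List.countP_eq_length_filter.symm
  have heL : s(a, b) ∈ L := by
    rw [hL, List.mem_filter]
    refine ⟨he, ?_⟩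
    simp [crossB, hχa, hχb]
  have hnodup : L.Nodup := hC.edges_nodup.filter _
  have h2 : 2 ≤ L.length := by
    have h1 : 0 < L.length := List.length_pos_of_mem heL
    rw [hlen] at h1 ⊢
    omega
  have hex : ∃ f ∈ L, f ≠ s(a, b) := by
    by_contra hcon
    push_neg at hcon
    have hcnt : List.count s(a,b) L = L.length :=
      List.count_eq_length.mpr (fun b hb => (hcon b hb).symm)
    have hle : List.count s(a,b) L ≤ 1 := List.nodup_iff_count_le_one.mp hnodup _
    omega
  obtain ⟨f, hfL, hfne⟩ := hex
  rw [hL, List.mem_filter] at hfL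
  obtain ⟨hfC, hfcross⟩ := hfL
  refine ⟨f, hfC, hfne, ?_⟩
  revert hfcross hfC hfne
  induction f using Sym2.inductionOn with
  | hf u v =>
  intro hfne hfC hfcross
  simp only [crossB, Sym2.lift_mk] at hfcross
  have hd1 := hdiff u
  have hd2 := hdiff v
  rcases Bool.eq_false_or_eq_true (χ u) with hu | hu
  · rw [hu] at hfcross
    simp only [Bool.true_xor, Bool.not_eq_true'] at hfcross
    have h1 : G.dist a u < G.dist b u := by simpa [hχ] using hu
    have h2 : ¬ (G.dist a v < G.dist b v) := by simpa [hχ] using hfcross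
    have h3 := hdiff v
    exact ⟨a, b, u, v, rfl, rfl, by omega⟩
  · rw [hu] at hfcross
    simp only [Bool.false_xor] at hfcross
    have h1 : G.dist a v < G.dist b v := by simpa [hχ] using hfcross
    have h2 : ¬ (G.dist a u < G.dist b u) := by simpa [hχ] using hu
    have h3 := hdiff u
    exact ⟨a, b, v, u, rfl, Sym2.eq_swap.symm, by omega⟩
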